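/- Let T be a positive integer, let x_1, …, x_T be positive reals, and let α ∈ [0,1]. Then ∑_{t=1}^{T} x_t^{1−α} / √(1 + ∑_{s=1}^{t} x_s^{1−2α}) ≤ 2·√( (∑_{t=1}^{T} x_t) · log(1 + ∑_{t=1}^{T} x_t^{1−2α}) ). -/

import Mathlib

lemma icc_sum_eq_range (n : ℕ) (g : ℕ → ℝ) :
    ∑ s ∈ Finset.Icc 1 n, g s = ∑ i ∈ Finset.range n, g (i + 1) := by
  induction n with
  | zero => simp
  | succ n ih =>
    rw [Finset.sum_Icc_succ_top (by omega), Finset.sum_range_succ, ih]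

/-- Lemma 4.1: the learning-rate design inequality. -/
theorem lr_design_inequality (T : ℕ) (hT : 1 ≤ T) (x : ℕ → ℝ)
    (hx : ∀ t ∈ Finset.Icc 1 T, 0 < x t)
    (α : ℝ) (hα : α ∈ Set.Icc (0 : ℝ) 1) :
    ∑ t ∈ Finset.Icc 1 T,
        x t ^ (1 - α) / Real.sqrt (1 + ∑ s ∈ Finset.Icc 1 t, x s ^ (1 - 2 * α))
      ≤ 2 * Real.sqrt ((∑ t ∈ Finset.Icc 1 T, x t) *
          Real.log (1 + ∑ t ∈ Finset.Icc 1 T, x t ^ (1 - 2 * α))) := by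
  set f : ℕ → ℝ := fun t => x t ^ (1 - 2 * α) with hfdef
  set S : ℕ → ℝ := fun t => 1 + ∑ s ∈ Finset.Icc 1 t, f s with hSdef
  have hfpos : ∀ t ∈ Finset.Icc 1 T, 0 < f t := fun t ht =>
    Real.rpow_pos_of_pos (hx t ht) _
  have hS1 : ∀ t, t ≤ T → 1 ≤ S t := by
    intro t ht
    have : 0 ≤ ∑ s ∈ Finset.Icc 1 t, f s :=
      Finset.sum_nonneg fun s hs => by
        have : s ∈ Finset.Icc 1 T := by
          simp only [Finset.mem_Icc] at hs ⊢; omega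
        exact (hfpos s this).le
    simp only [hSdef]; linarith
  have hSpos : ∀ t, t ≤ T → 0 < S t := fun t ht => lt_of_lt_of_le one_pos (hS1 t ht)
  -- Step 1: Cauchy-Schwarz
  set g : ℕ → ℝ := fun t => Real.sqrt (x t) with hgdef
  set h : ℕ → ℝ := fun t => Real.sqrt (f t) / Real.sqrt (S t) with hhdef
  have hterm : ∀ t ∈ Finset.Icc 1 T,
      x t ^ (1 - α) / Real.sqrt (S t) = g t * h t := by
    intro t ht
    have hxt := hx t ht
    have hnum : Real.sqrt (x t) * Real.sqrt (f t) = x t ^ (1 - α) := by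
      rw [← Real.sqrt_mul hxt.le]
      have : x t * f t = (x t ^ (1 - α)) ^ 2 := by
        rw [sq, ← Real.rpow_add hxt, hfdef]
        nth_rewrite 1 [← Real.rpow_one (x t)]
        rw [← Real.rpow_add hxt]
        ring_nf
      rw [this, Real.sqrt_sq (Real.rpow_nonneg hxt.le _)]
    rw [hgdef, hhdef]
    simp only
    rw [mul_div_assoc'] at *
    rw [hnum]
  rw [Finset.sum_congr rfl hterm]
  have hCS := Finset.sum_mul_sq_le_sq_mul_sq (Finset.Icc 1 T) g h
  have hg2 : ∑ t ∈ Finset.Icc 1 T, g t ^ 2 = ∑ t ∈ Finset.Icc 1 T, x t :=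
    Finset.sum_congr rfl fun t ht => Real.sq_sqrt (hx t ht).le
  have hh2 : ∑ t ∈ Finset.Icc 1 T, h t ^ 2 = ∑ t ∈ Finset.Icc 1 T, f t / S t := by
    refine Finset.sum_congr rfl fun t ht => ?_
    have htT : t ≤ T := (Finset.mem_Icc.mp ht).2
    simp only [hhdef, div_pow, Real.sq_sqrt (hfpos t ht).le,
      Real.sq_sqrt (hSpos t htT).le]
  -- Step 2: log bound
  have hlog : ∑ t ∈ Finset.Icc 1 T, f t / S t ≤ Real.log (S T) := by
    have hstep : ∀ i ∈ Finset.range T,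
        f (i + 1) / S (i + 1) ≤ Real.log (S (i + 1)) - Real.log (S i) := by
      intro i hi
      have hiT : i + 1 ≤ T := Finset.mem_range.mp hi
      have ha : 0 < S (i + 1) := hSpos _ hiT
      have hb : 0 < S i := hSpos _ (by omega)
      have hdiff : S (i + 1) = S i + f (i + 1) := by
        simp only [hSdef]
        rw [Finset.sum_Icc_succ_top (by omega)]
        ring
      have hlb := Real.log_le_sub_one_of_pos (div_pos hb ha)
      rw [Real.log_div hb.ne' ha.ne'] at hlb
      have : f (i + 1) / S (i + 1) = 1 - S i / S (i + 1) := by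
        field_simp
        linarith [hdiff]
      rw [this]
      linarith
    calc ∑ t ∈ Finset.Icc 1 T, f t / S t
        = ∑ i ∈ Finset.range T, f (i + 1) / S (i + 1) :=
          icc_sum_eq_range T fun t => f t / S t
      _ ≤ ∑ i ∈ Finset.range T, (Real.log (S (i + 1)) - Real.log (S i)) :=
          Finset.sum_le_sum hstep
      _ = Real.log (S T) - Real.log (S 0) := Finset.sum_range_sub (fun i => Real.log (S i)) T
      _ = Real.log (S T) := by
          simp [hSdef]
  -- Assemble
  have hLnn : 0 ≤ Real.log (S T) := Real.log_nonneg (hS1 T le_rfl)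
  have hXnn : 0 ≤ ∑ t ∈ Finset.Icc 1 T, x t :=
    Finset.sum_nonneg fun t ht => (hx t ht).le
  have hLHSnn : 0 ≤ ∑ t ∈ Finset.Icc 1 T, g t * h t :=
    Finset.sum_nonneg fun t ht => mul_nonneg (Real.sqrt_nonneg _)
      (div_nonneg (Real.sqrt_nonneg _) (Real.sqrt_nonneg _))
  have hsq : (∑ t ∈ Finset.Icc 1 T, g t * h t) ^ 2 ≤
      (∑ t ∈ Finset.Icc 1 T, x t) * Real.log (S T) := by
    refine hCS.trans ?_
    rw [hg2, hh2]
    exact mul_le_mul_of_nonneg_left hlog hXnn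
  have hle : ∑ t ∈ Finset.Icc 1 T, g t * h t ≤
      Real.sqrt ((∑ t ∈ Finset.Icc 1 T, x t) * Real.log (S T)) :=
    Real.le_sqrt_of_sq_le hsq
  calc ∑ t ∈ Finset.Icc 1 T, g t * h t
      ≤ Real.sqrt ((∑ t ∈ Finset.Icc 1 T, x t) * Real.log (S T)) := hle
    _ ≤ 2 * Real.sqrt ((∑ t ∈ Finset.Icc 1 T, x t) * Real.log (S T)) := by
        nlinarith [Real.sqrt_nonneg ((∑ t ∈ Finset.Icc 1 T, x t) * Real.log (S T))]
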